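/- (Topological Rudin Lemma) Let X be a topological space and 𝓕 a filtered family of compact subsets of X (for any F₁, F₂ ∈ 𝓕 there is F ∈ 𝓕 with F ⊆ ↑F₁ ∩ ↑F₂). Any closed set C ⊆ X that meets every member of 𝓕 contains a minimal irreducible closed subset A that still meets every member of 𝓕; minimality means any proper closed subset of A misses some member of 𝓕. -/
import Mathlib


open Set

/-- The specialization order of the paper: `x ≤ y` iff `x ∈ cl {y}`. -/
def specLE {X : Type*} [TopologicalSpace X] (x y : X) : Prop := x ∈ closure ({y} : Set X)

/-- Upward closure `↑A` w.r.t. the specialization order. -/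
def upSet {X : Type*} [TopologicalSpace X] (A : Set X) : Set X := {y | ∃ x ∈ A, specLE x y}

/-- Downward closure `↓A` w.r.t. the specialization order. -/
def downSet {X : Type*} [TopologicalSpace X] (A : Set X) : Set X := {y | ∃ x ∈ A, specLE y x}

/-- The saturation of a set: the intersection of all open sets containing it. -/
def sat {X : Type*} [TopologicalSpace X] (A : Set X) : Set X := ⋂₀ {U | IsOpen U ∧ A ⊆ U}

/-- A `T0` space is well-filtered if for every filtered family `𝓕` of compact saturated
sets and every open `U` with `⋂₀ 𝓕 ⊆ U`, some member of `𝓕` is contained in `U`. -/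
def WellFilteredSpace (X : Type*) [TopologicalSpace X] : Prop :=
  ∀ 𝓕 : Set (Set X), 𝓕.Nonempty →
    (∀ K ∈ 𝓕, IsCompact K ∧ sat K = K) →
    (∀ K₁ ∈ 𝓕, ∀ K₂ ∈ 𝓕, ∃ K₃ ∈ 𝓕, K₃ ⊆ K₁ ∩ K₂) →
    ∀ U : Set X, IsOpen U → ⋂₀ 𝓕 ⊆ U → ∃ K ∈ 𝓕, K ⊆ U

theorem stmt10 {X : Type*} [TopologicalSpace X]
    (𝓕 : Set (Set X)) (h𝓕 : 𝓕.Nonempty) (hc : ∀ F ∈ 𝓕, IsCompact F)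
    (hfil : ∀ F₁ ∈ 𝓕, ∀ F₂ ∈ 𝓕, ∃ F ∈ 𝓕, F ⊆ upSet F₁ ∩ upSet F₂)
    (C : Set X) (hC : IsClosed C) (hmeets : ∀ F ∈ 𝓕, (C ∩ F).Nonempty) :
    ∃ A : Set X, A ⊆ C ∧ IsClosed A ∧ IsIrreducible A ∧
      (∀ F ∈ 𝓕, (A ∩ F).Nonempty) ∧
      (∀ A' : Set X, A' ⊆ A → IsClosed A' → A' ≠ A → ∃ F ∈ 𝓕, A' ∩ F = ∅) := by
  set S : Set (Set X) := {A | A ⊆ C ∧ IsClosed A ∧ ∀ F ∈ 𝓕, (A ∩ F).Nonempty} with hS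
  have hzorn : ∀ c ⊆ S, IsChain (· ⊆ ·) c → c.Nonempty → ∃ lb ∈ S, ∀ s ∈ c, lb ⊆ s := by
    intro c hcS hchain hcne
    refine ⟨⋂₀ c, ⟨?_, ?_, ?_⟩, fun s hs => sInter_subset_of_mem hs⟩
    · obtain ⟨s, hs⟩ := hcne
      exact (sInter_subset_of_mem hs).trans (hcS hs).1
    · exact isClosed_sInter fun s hs => (hcS hs).2.1
    · intro F hF
      have : Nonempty c := hcne.to_subtype
      by_contra hemp
      rw [Set.not_nonempty_iff_eq_empty] at hemp
      have hemp' : (F ∩ ⋂ s : c, (s : Set X)) = ∅ := by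
        rw [← sInter_eq_iInter, Set.inter_comm]; exact hemp
      have hdir : Directed (· ⊇ ·) (fun s : c => (s : Set X)) := by
        rintro ⟨s, hs⟩ ⟨t, ht⟩
        rcases hchain.total hs ht with h | h
        · exact ⟨⟨s, hs⟩, subset_rfl, h⟩
        · exact ⟨⟨t, ht⟩, h, subset_rfl⟩
      obtain ⟨⟨s, hs⟩, hsF⟩ := (hc F hF).elim_directed_family_closed
        (fun s : c => (s : Set X)) (fun s => (hcS s.2).2.1) hemp' hdir
      exact ((hcS hs).2.2 F hF).ne_empty (by rw [Set.inter_comm] at hsF; exact hsF)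
  have hCmem : C ∈ S := ⟨subset_rfl, hC, hmeets⟩
  obtain ⟨A, -, hAS, hmin⟩ := zorn_superset_nonempty S hzorn C hCmem
  obtain ⟨hAC, hAcl, hAmeets⟩ := hAS
  have hminimal : ∀ A' : Set X, A' ⊆ A → IsClosed A' → A' ≠ A → ∃ F ∈ 𝓕, A' ∩ F = ∅ := by
    intro A' hA'A hA'cl hne
    by_contra h
    push_neg at h
    have : A' ∈ S := ⟨hA'A.trans hAC, hA'cl, fun F hF =>
      h F hF⟩
    exact hne (subset_antisymm hA'A (hmin this hA'A))
  have hAne : A.Nonempty := by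
    obtain ⟨F, hF⟩ := h𝓕
    obtain ⟨x, hx, -⟩ := hAmeets F hF
    exact ⟨x, hx⟩
  refine ⟨A, hAC, hAcl, ⟨hAne, ?_⟩, hAmeets, hminimal⟩
  rw [isPreirreducible_iff_isClosed_union_isClosed]
  intro Z₁ Z₂ hZ₁ hZ₂ hsub
  by_contra hcon
  push_neg at hcon
  obtain ⟨hn₁, hn₂⟩ := hcon
  obtain ⟨G₁, hG₁, hG₁e⟩ := hminimal (A ∩ Z₁) inter_subset_left (hAcl.inter hZ₁)
    (fun h => hn₁ (h ▸ inter_subset_right))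
  obtain ⟨G₂, hG₂, hG₂e⟩ := hminimal (A ∩ Z₂) inter_subset_left (hAcl.inter hZ₂)
    (fun h => hn₂ (h ▸ inter_subset_right))
  obtain ⟨G, hG, hGsub⟩ := hfil G₁ hG₁ G₂ hG₂
  obtain ⟨x, hxA, hxG⟩ := hAmeets G hG
  obtain ⟨hup1, hup2⟩ := hGsub hxG
  obtain ⟨g₁, hg₁G, hg₁x⟩ := hup1
  obtain ⟨g₂, hg₂G, hg₂x⟩ := hup2
  have hg₁A : g₁ ∈ A := hAcl.closure_subset_iff.mpr (singleton_subset_iff.mpr hxA) hg₁x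
  have hg₂A : g₂ ∈ A := hAcl.closure_subset_iff.mpr (singleton_subset_iff.mpr hxA) hg₂x
  rcases hsub hxA with hx1 | hx2
  · have : g₁ ∈ Z₁ := hZ₁.closure_subset_iff.mpr (singleton_subset_iff.mpr hx1) hg₁x
    exact (Set.eq_empty_iff_forall_notMem.mp hG₁e g₁) ⟨⟨hg₁A, this⟩, hg₁G⟩
  · have : g₂ ∈ Z₂ := hZ₂.closure_subset_iff.mpr (singleton_subset_iff.mpr hx2) hg₂x
    exact (Set.eq_empty_iff_forall_notMem.mp hG₂e g₂) ⟨⟨hg₂A, this⟩, hg₂G⟩
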